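/- Let ι be a finite nonempty type, H a countable type, and π a probability mass function on ι × H with marginal π_M(m) = Σ_h π(m,h) > 0 for every m and conditionals π(h|m) = π(m,h)/π_M(m). For each m ∈ ι let Q_{H|m} be a pmf on H with KL(Q_{H|m}‖π(·|m)) < ∞. Define the weights ᾱ_m = π_M(m)·exp(−KL(Q_{H|m}‖π(·|m))) / Σ_{j∈ι} π_M(j)·exp(−KL(Q_{H|j}‖π(·|j))). Then for every pmf Q_M on ι, KL(Q_ᾱ‖π) ≤ KL(Q‖π), where Q(m,h) = Q_M(m)·Q_{H|m}(h) and Q_ᾱ(m,h) = ᾱ_m·Q_{H|m}(h); i.e., ᾱ minimizes Q_M ↦ KL(Q_M ⊗ Q_{H|·}‖π) over all pmfs Q_M on ι. -/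

import Mathlib

open scoped ENNReal Classical

/-- Kullback–Leibler divergence between two probability mass functions on a countable
type: `KL(p‖q) = ∑ x, p x * log (p x / q x) ∈ [0,∞]`, with the conventions
`0 * log (0 / q x) = 0` (automatic since the factor `p x` vanishes) and
`KL(p‖q) = ∞` when `p` is not absolutely continuous with respect to `q`
(or when the series fails to be summable, in which case the sum is genuinely `+∞`
since the negative parts of a relative-entropy series are always summable). -/
noncomputable def klDiv {X : Type*} (p q : PMF X) : ℝ≥0∞ :=
  if (∀ x, q x = 0 → p x = 0) ∧
      Summable (fun x => (p x).toReal * Real.log ((p x).toReal / (q x).toReal))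
  then ENNReal.ofReal (∑' x, (p x).toReal * Real.log ((p x).toReal / (q x).toReal))
  else ⊤

/-- The joint pmf on `ι × H` obtained from a pmf `QM` on `ι` and a family of conditionals
`QH m` on `H`; its value at `(m, h)` is `QM m * QH m h`. -/
noncomputable def jointPMF {ι H : Type*} (QM : PMF ι) (QH : ι → PMF H) : PMF (ι × H) :=
  QM.bind fun m => (QH m).map fun h => (m, h)

/- ### Auxiliary lemmas -/

private lemma pmf_toReal_summable {X : Type*} (p : PMF X) :
    Summable fun x => (p x).toReal :=
  ENNReal.summable_toReal (by rw [p.tsum_coe]; exact ENNReal.one_ne_top)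

private lemma pmf_tsum_toReal {X : Type*} (p : PMF X) : ∑' x, (p x).toReal = 1 := by
  rw [← ENNReal.tsum_toReal_eq (fun a => p.apply_ne_top a), p.tsum_coe, ENNReal.toReal_one]

private lemma pmf_sum_toReal {X : Type*} [Fintype X] (p : PMF X) :
    ∑ x, (p x).toReal = 1 := by
  rw [← tsum_fintype (L := SummationFilter.unconditional X)]; exact pmf_tsum_toReal p

/-- Pointwise bound underlying Gibbs' inequality. -/
private lemma klTerm_ge {a b : ℝ} (ha : 0 ≤ a) (hb : 0 ≤ b) (hab : b = 0 → a = 0) :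
    a - b ≤ a * Real.log (a / b) := by
  rcases eq_or_lt_of_le ha with ha0 | ha0
  · simp [← ha0]; exact hb
  · have hb0 : 0 < b := by
      rcases eq_or_lt_of_le hb with hb0 | hb0
      · exact absurd (hab hb0.symm) ha0.ne'
      · exact hb0
    have h1 : Real.log (b / a) ≤ b / a - 1 :=
      Real.log_le_sub_one_of_pos (div_pos hb0 ha0)
    have h2 : 1 - b / a ≤ Real.log (a / b) := by
      rw [Real.log_div hb0.ne' ha0.ne'] at h1
      rw [Real.log_div ha0.ne' hb0.ne']
      linarith
    have h3 := mul_le_mul_of_nonneg_left h2 ha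
    have h4 : a * (1 - b / a) = a - b := by field_simp
    linarith

/-- Gibbs' inequality (nonnegativity of the relative-entropy series) on a countable type. -/
private lemma gibbs_nonneg {X : Type*} (p q : PMF X)
    (hac : ∀ x, q x = 0 → p x = 0)
    (hs : Summable fun x => (p x).toReal * Real.log ((p x).toReal / (q x).toReal)) :
    0 ≤ ∑' x, (p x).toReal * Real.log ((p x).toReal / (q x).toReal) := by
  have key : ∀ x, (p x).toReal - (q x).toReal
      ≤ (p x).toReal * Real.log ((p x).toReal / (q x).toReal) := by
    intro x
    refine klTerm_ge ENNReal.toReal_nonneg ENNReal.toReal_nonneg (fun hb => ?_)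
    have hq0 : q x = 0 :=
      (ENNReal.toReal_eq_zero_iff _).mp hb |>.resolve_right (q.apply_ne_top x)
    simp [hac x hq0]
  have hsub : Summable fun x => (p x).toReal - (q x).toReal :=
    (pmf_toReal_summable p).sub (pmf_toReal_summable q)
  have h := Summable.tsum_le_tsum key hsub hs
  rwa [Summable.tsum_sub (pmf_toReal_summable p) (pmf_toReal_summable q),
    pmf_tsum_toReal, pmf_tsum_toReal, sub_self] at h

private lemma jointPMF_apply {ι H : Type*} (QM : PMF ι) (QH : ι → PMF H) (m : ι) (h : H) :
    jointPMF QM QH (m, h) = QM m * QH m h := by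
  classical
  rw [jointPMF, PMF.bind_apply]
  rw [tsum_eq_single m (fun m' hm' => ?_)]
  · congr 1
    rw [PMF.map_apply]
    rw [tsum_eq_single h (fun h' hh' => ?_)]
    · simp
    · rw [if_neg]
      simp only [Prod.mk.injEq]
      rintro ⟨-, rfl⟩
      exact hh' rfl
  · rw [PMF.map_apply]
    convert mul_zero (QM m') using 2
    rw [ENNReal.tsum_eq_zero]
    intro h'
    rw [if_neg]
    simp only [Prod.mk.injEq]
    rintro ⟨rfl, -⟩
    exact hm' rfl

/-- A real-valued function on a product with finite first factor is summable as soon as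
every section is. -/
private lemma summable_prod_of_fintype {ι H : Type*} [Fintype ι] (f : ι × H → ℝ)
    (hs : ∀ m, Summable fun h => f (m, h)) : Summable f := by
  classical
  have hrepr : f = fun x : ι × H => ∑ m, (if x.1 = m then f (m, x.2) else 0) := by
    funext x
    rw [Finset.sum_ite_eq]
    simp
  rw [hrepr]
  refine summable_sum (fun m _ => ?_)
  have hinj : Function.Injective (fun h : H => ((m, h) : ι × H)) := by
    intro a b hab
    simpa using hab
  have hzero : ∀ x ∉ Set.range (fun h : H => ((m, h) : ι × H)),
      (if x.1 = m then f (m, x.2) else 0) = 0 := by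
    rintro ⟨m', h'⟩ hx
    rw [if_neg]
    intro he
    exact hx ⟨h', by simp [he.symm]⟩
  refine (hinj.summable_iff hzero).mp ?_
  have hco : ((fun x : ι × H => if x.1 = m then f (m, x.2) else 0) ∘ fun h : H => (m, h))
      = fun h => f (m, h) := by
    funext h; simp
  rw [hco]
  exact hs m

/-- Summability and value of one section of the joint relative-entropy series. -/
private lemma section_tsum {H : Type*} (QHm condm : PMF H)
    (hAC : ∀ h, condm h = 0 → QHm h = 0)
    (hgsum : Summable fun h => (QHm h).toReal * Real.log ((QHm h).toReal / (condm h).toReal))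
    (q pm : ℝ) (hq : 0 ≤ q) (hpm : 0 < pm) :
    Summable (fun h => (q * (QHm h).toReal) *
        Real.log ((q * (QHm h).toReal) / (pm * (condm h).toReal)))
      ∧ ∑' h, (q * (QHm h).toReal) *
          Real.log ((q * (QHm h).toReal) / (pm * (condm h).toReal))
        = q * Real.log (q / pm)
          + q * ∑' h, (QHm h).toReal * Real.log ((QHm h).toReal / (condm h).toReal) := by
  have hsplit : ∀ h, (q * (QHm h).toReal) *
      Real.log ((q * (QHm h).toReal) / (pm * (condm h).toReal))
      = q * Real.log (q / pm) * (QHm h).toReal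
        + q * ((QHm h).toReal * Real.log ((QHm h).toReal / (condm h).toReal)) := by
    intro h
    rcases eq_or_lt_of_le hq with hq0 | hq0
    · simp [← hq0]
    rcases eq_or_lt_of_le (ENNReal.toReal_nonneg : 0 ≤ (QHm h).toReal) with hr0 | hr0
    · simp [← hr0]
    · have hc0 : 0 < (condm h).toReal := by
        refine ENNReal.toReal_pos (fun hc => ?_) (condm.apply_ne_top h)
        have := hAC h hc
        rw [this] at hr0
        simp at hr0
      have hdiv : (q * (QHm h).toReal) / (pm * (condm h).toReal)
          = (q / pm) * ((QHm h).toReal / (condm h).toReal) := by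
        rw [div_mul_div_comm]
      rw [hdiv, Real.log_mul (by positivity) (by positivity)]
      ring
    
  constructor
  · rw [funext hsplit]
    exact ((pmf_toReal_summable QHm).mul_left _).add (hgsum.mul_left _)
  · rw [tsum_congr hsplit,
      Summable.tsum_add ((pmf_toReal_summable QHm).mul_left _) (hgsum.mul_left _),
      tsum_mul_left, tsum_mul_left, pmf_tsum_toReal]
    ring

set_option maxHeartbeats 1000000 in
/-- The relative entropy of a joint `Q ⊗ QH` w.r.t. a factorized `π = πM ⊗ cond`. -/
private lemma kl_joint_eq {ι H : Type*} [Fintype ι]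
    (π : PMF (ι × H)) (πM : PMF ι) (hπM_pos : ∀ m, 0 < πM m)
    (cond : ι → PMF H) (hfac : ∀ m h, π (m, h) = πM m * cond m h)
    (QH : ι → PMF H)
    (hAC : ∀ m h, cond m h = 0 → QH m h = 0)
    (hgsum : ∀ m, Summable fun h =>
      (QH m h).toReal * Real.log ((QH m h).toReal / (cond m h).toReal))
    (Q : PMF ι) :
    klDiv (jointPMF Q QH) π = ENNReal.ofReal (∑ m,
      ((Q m).toReal * Real.log ((Q m).toReal / (πM m).toReal)
        + (Q m).toReal * ∑' h,
            (QH m h).toReal * Real.log ((QH m h).toReal / (cond m h).toReal))) := by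
  have hp_pos : ∀ m, 0 < (πM m).toReal := fun m =>
    ENNReal.toReal_pos (hπM_pos m).ne' (πM.apply_ne_top m)
  have hsec := fun m => section_tsum (QH m) (cond m) (hAC m) (hgsum m)
      (Q m).toReal (πM m).toReal ENNReal.toReal_nonneg (hp_pos m)
  have hval : ∀ x : ι × H,
      (jointPMF Q QH x).toReal * Real.log ((jointPMF Q QH x).toReal / (π x).toReal)
      = ((Q x.1).toReal * (QH x.1 x.2).toReal) *
          Real.log (((Q x.1).toReal * (QH x.1 x.2).toReal) /
            ((πM x.1).toReal * (cond x.1 x.2).toReal)) := by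
    rintro ⟨m, h⟩
    rw [jointPMF_apply, hfac, ENNReal.toReal_mul, ENNReal.toReal_mul]
  have hACj : ∀ x : ι × H, π x = 0 → jointPMF Q QH x = 0 := by
    rintro ⟨m, h⟩ h0
    rw [hfac] at h0
    rcases mul_eq_zero.mp h0 with h0 | h0
    · exact absurd h0 (hπM_pos m).ne'
    · rw [jointPMF_apply, hAC m h h0, mul_zero]
  have hsumm : Summable fun x : ι × H =>
      (jointPMF Q QH x).toReal * Real.log ((jointPMF Q QH x).toReal / (π x).toReal) := by
    rw [funext hval]
    exact summable_prod_of_fintype _ (fun m => (hsec m).1)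
  rw [klDiv, if_pos ⟨hACj, hsumm⟩]
  congr 1
  rw [tsum_congr hval, Summable.tsum_prod' (by rw [← funext hval]; exact hsumm)
    (fun m => (hsec m).1), tsum_fintype]
  exact Finset.sum_congr rfl (fun m _ => (hsec m).2)

/-- The finite-dimensional optimization: the normalized weights `w/Z` minimize
`q ↦ ∑ (q log (q/p) + q K)` over probability vectors `q`. -/
private lemma real_opt {ι : Type*} [Fintype ι] [Nonempty ι]
    (p K : ι → ℝ) (hp : ∀ m, 0 < p m) (a q : ι → ℝ)
    (ha : ∀ m, a m = p m * Real.exp (-K m) / ∑ j, p j * Real.exp (-K j))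
    (hq0 : ∀ m, 0 ≤ q m) (hq1 : ∑ m, q m = 1) :
    ∑ m, (a m * Real.log (a m / p m) + a m * K m)
      ≤ ∑ m, (q m * Real.log (q m / p m) + q m * K m) := by
  classical
  set w : ι → ℝ := fun m => p m * Real.exp (-K m) with hw
  have hw_pos : ∀ m, 0 < w m := fun m => mul_pos (hp m) (Real.exp_pos _)
  set Z : ℝ := ∑ j, w j with hZ
  have hZ_pos : 0 < Z := Finset.sum_pos (fun j _ => hw_pos j) Finset.univ_nonempty
  have ha' : ∀ m, a m = w m / Z := ha
  have ha_pos : ∀ m, 0 < a m := fun m => by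
    rw [ha' m]; exact div_pos (hw_pos m) hZ_pos
  have ha1 : ∑ m, a m = 1 := by
    rw [Finset.sum_congr rfl (fun m _ => ha' m), ← Finset.sum_div, ← hZ,
      div_self hZ_pos.ne']
  -- termwise rewriting in terms of w
  have hterm : ∀ x : ℝ, 0 ≤ x → ∀ m,
      x * Real.log (x / p m) + x * K m = x * Real.log (x / w m) := by
    intro x hx m
    rcases eq_or_lt_of_le hx with hx0 | hx0
    · simp [← hx0]
    · rw [hw]
      rw [Real.log_div hx0.ne' (hw_pos m).ne', Real.log_mul (hp m).ne' (Real.exp_pos _).ne',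
        Real.log_exp, Real.log_div hx0.ne' (hp m).ne']
      ring
  rw [Finset.sum_congr rfl (fun m _ => hterm (a m) (ha_pos m).le m),
    Finset.sum_congr rfl (fun m _ => hterm (q m) (hq0 m) m)]
  -- left side is -log Z
  have hleft : ∑ m, a m * Real.log (a m / w m) = -Real.log Z := by
    have : ∀ m, a m * Real.log (a m / w m) = a m * (-Real.log Z) := by
      intro m
      have : a m / w m = 1 / Z := by
        rw [ha' m, div_div, mul_comm Z (w m), ← div_div, div_self (hw_pos m).ne']
      rw [this, one_div, Real.log_inv]
    rw [Finset.sum_congr rfl (fun m _ => this m), ← Finset.sum_mul, ha1, one_mul]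
  rw [hleft]
  -- right side: q log (q/w) = q log (q/a) - q log Z
  have hright : ∀ m, q m * Real.log (q m / w m)
      = q m * Real.log (q m / a m) - q m * Real.log Z := by
    intro m
    rcases eq_or_lt_of_le (hq0 m) with hx0 | hx0
    · simp [← hx0]
    · have hwza : w m = Z * a m := by
        rw [ha' m]; field_simp
      rw [hwza, mul_comm Z (a m), ← div_div,
        Real.log_div (div_pos hx0 (ha_pos m)).ne' hZ_pos.ne']
      ring
  rw [Finset.sum_congr rfl (fun m _ => hright m), Finset.sum_sub_distrib,
    ← Finset.sum_mul, hq1, one_mul]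
  -- Gibbs: ∑ q log (q/a) ≥ 0
  have hgibbs : 0 ≤ ∑ m, q m * Real.log (q m / a m) := by
    have hterm2 : ∀ m ∈ Finset.univ, q m - a m ≤ q m * Real.log (q m / a m) := fun m _ =>
      klTerm_ge (hq0 m) (ha_pos m).le (fun h0 => absurd h0 (ha_pos m).ne')
    have := Finset.sum_le_sum hterm2
    rw [Finset.sum_sub_distrib, hq1, ha1, sub_self] at this
    exact this
  linarith

/-- **Proposition 1 of the paper (optimality of the variational weights), discrete
version.** Let `π` be a pmf on `ι × H` with positive marginal `πM` and conditionals
`cond m`. For a family `QH m` of pmfs on `H` with `KL(QH m‖cond m) < ∞`, the weights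
`ᾱ m = πM m * exp (- KL(QH m‖cond m)) / ∑ j, πM j * exp (- KL(QH j‖cond j))`
minimize `QM ↦ KL(QM ⊗ QH‖π)` over all pmfs `QM` on `ι`, where
`(QM ⊗ QH) (m, h) = QM m * QH m h`. -/
theorem variational_weights_optimal {ι H : Type*} [Fintype ι] [Nonempty ι] [Countable H]
    (π : PMF (ι × H))
    (πM : PMF ι) (hπM : ∀ m, πM m = ∑' h, π (m, h))
    (hπM_pos : ∀ m, 0 < πM m)
    (cond : ι → PMF H) (hcond : ∀ m h, cond m h = π (m, h) / πM m)
    (QH : ι → PMF H) (hfin : ∀ m, klDiv (QH m) (cond m) < ⊤)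
    (αbar : PMF ι)
    (hαbar : ∀ m, αbar m = ENNReal.ofReal
      ((πM m).toReal * Real.exp (- (klDiv (QH m) (cond m)).toReal) /
        ∑ j, (πM j).toReal * Real.exp (- (klDiv (QH j) (cond j)).toReal)))
    (QM : PMF ι) :
    klDiv (jointPMF αbar QH) π ≤ klDiv (jointPMF QM QH) π := by
  classical
  have hfac : ∀ m h, π (m, h) = πM m * cond m h := by
    intro m h
    rw [hcond m h, mul_comm, ENNReal.div_mul_cancel (hπM_pos m).ne' (πM.apply_ne_top m)]
  have hcondm : ∀ m, (∀ h, cond m h = 0 → QH m h = 0) ∧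
      Summable (fun h => (QH m h).toReal *
        Real.log ((QH m h).toReal / (cond m h).toReal)) := by
    intro m
    by_contra hcon
    have h1 := hfin m
    rw [klDiv, if_neg hcon] at h1
    exact lt_irrefl _ h1
  have hK : ∀ m, (klDiv (QH m) (cond m)).toReal
      = ∑' h, (QH m h).toReal * Real.log ((QH m h).toReal / (cond m h).toReal) := by
    intro m
    rw [klDiv, if_pos (hcondm m),
      ENNReal.toReal_ofReal (gibbs_nonneg _ _ (hcondm m).1 (hcondm m).2)]
  rw [kl_joint_eq π πM hπM_pos cond hfac QH (fun m => (hcondm m).1)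
      (fun m => (hcondm m).2) αbar,
    kl_joint_eq π πM hπM_pos cond hfac QH (fun m => (hcondm m).1)
      (fun m => (hcondm m).2) QM]
  apply ENNReal.ofReal_le_ofReal
  simp only [← hK]
  refine real_opt (fun m => (πM m).toReal) (fun m => (klDiv (QH m) (cond m)).toReal)
    (fun m => ENNReal.toReal_pos (hπM_pos m).ne' (πM.apply_ne_top m))
    (fun m => (αbar m).toReal) (fun m => (QM m).toReal)
    (fun m => ?_) (fun m => ENNReal.toReal_nonneg) (pmf_sum_toReal QM)
  rw [hαbar m, ENNReal.toReal_ofReal (div_nonneg (by positivity)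
    (Finset.sum_nonneg fun j _ => by positivity))]
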